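/- Let A be an ℝ-algebra with a ℤ/2-grading A = A⁰ ⊕ A¹ and suppose there exists an even element ε ∈ A⁰ with ε² = 1 that commutes with A⁰ and anticommutes with A¹ (for instance ε = e₁⋯eₙ in a Clifford algebra of rank divisible by 4). Then for any ℤ/2-graded ℝ-algebra B, the graded tensor product A ⊗̂ B is isomorphic as an algebra to the ungraded tensor product A ⊗ B. -/

import Mathlib

open scoped TensorProduct
open DirectSum

noncomputable section Stmt19Aux

variable {A B : Type} [Ring A] [Ring B] [Algebra ℝ A] [Algebra ℝ B]
  (𝒜 : ZMod 2 → Submodule ℝ A) (ℬ : ZMod 2 → Submodule ℝ B)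
  [GradedAlgebra 𝒜] [GradedAlgebra ℬ]

/-- `ε^j` for `j : ZMod 2`. -/
def stmt19P (ε : A) (j : ZMod 2) : A := ε ^ j.val

lemma stmt19P_zero (ε : A) : stmt19P ε 0 = 1 := pow_zero ε

lemma stmt19P_one (ε : A) : stmt19P ε 1 = ε := pow_one ε

variable {ε : A}

lemma stmt19_pow_mod (hε2 : ε * ε = 1) (n : ℕ) : ε ^ n = ε ^ (n % 2) := by
  conv_lhs => rw [← Nat.div_add_mod n 2]
  rw [pow_add, pow_mul, pow_two, hε2, one_pow, one_mul]

lemma stmt19P_mul (hε2 : ε * ε = 1) (i j : ZMod 2) :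
    stmt19P ε i * stmt19P ε j = stmt19P ε (i + j) := by
  rw [stmt19P, stmt19P, stmt19P, ← pow_add, ZMod.val_add, ← stmt19_pow_mod hε2]

lemma stmt19P_comm (hcomm : ∀ a ∈ 𝒜 0, ε * a = a * ε)
    (hanti : ∀ a ∈ 𝒜 1, ε * a = -(a * ε)) {i : ZMod 2} (a : A) (ha : a ∈ 𝒜 i) (j : ZMod 2) :
    a * stmt19P ε j = ((-1 : ℤˣ) ^ (j * i) : ℤˣ) • (stmt19P ε j * a) := by
  fin_cases j
  · show a * stmt19P ε 0 = ((-1 : ℤˣ) ^ ((0 : ZMod 2) * i) : ℤˣ) • (stmt19P ε 0 * a)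
    simp [stmt19P_zero]
  · show a * stmt19P ε 1 = ((-1 : ℤˣ) ^ ((1 : ZMod 2) * i) : ℤˣ) • (stmt19P ε 1 * a)
    rw [stmt19P_one]
    fin_cases i
    · show a * ε = ((-1 : ℤˣ) ^ ((1 : ZMod 2) * 0) : ℤˣ) • (ε * a)
      rw [mul_zero, uzpow_zero, one_smul, hcomm a ha]
    · show a * ε = ((-1 : ℤˣ) ^ ((1 : ZMod 2) * 1) : ℤˣ) • (ε * a)
      rw [mul_one, uzpow_one, hanti a ha, Units.smul_def]
      push_cast
      simp


variable (ε) in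
/-- The linear map `b ↦ ε^{|b|} ⊗ b`. -/
def stmt19G : B →ₗ[ℝ] A ⊗[ℝ] B :=
  (DirectSum.toModule ℝ (ZMod 2) (A ⊗[ℝ] B) fun j =>
      (TensorProduct.mk ℝ A B (stmt19P ε j)).comp (ℬ j).subtype)
    ∘ₗ (DirectSum.decomposeLinearEquiv ℬ).toLinearMap

lemma stmt19G_coe {j : ZMod 2} (b : ℬ j) :
    stmt19G ℬ ε (b : B) = stmt19P ε j ⊗ₜ[ℝ] (b : B) := by
  rw [stmt19G, LinearMap.comp_apply, LinearEquiv.coe_coe, DirectSum.decomposeLinearEquiv_apply,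
    DirectSum.decompose_coe, ← DirectSum.lof_eq_of ℝ, DirectSum.toModule_lof]
  rfl

variable (ε) in
/-- The algebra hom `b ↦ ε^{|b|} ⊗ b`. -/
def stmt19GAlg (hε2 : ε * ε = 1) : B →ₐ[ℝ] A ⊗[ℝ] B :=
  AlgHom.ofLinearMap (stmt19G ℬ ε)
    (by
      have h1 := stmt19G_coe ℬ (ε := ε) (@GradedMonoid.GOne.one _ (ℬ ·) _ _)
      rw [SetLike.coe_gOne, stmt19P_zero] at h1
      rw [h1, Algebra.TensorProduct.one_def])
    (by
      rw [LinearMap.map_mul_iff]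
      refine DirectSum.decompose_lhom_ext ℬ fun i => ?_
      ext b₁ : 1
      refine DirectSum.decompose_lhom_ext ℬ fun j => ?_
      ext b₂ : 1
      dsimp only [LinearMap.comp_apply, Submodule.subtype_apply, LinearMap.compl₂_apply,
        LinearMap.compr₂_apply, LinearMap.mul_apply', LinearMap.flip_apply]
      have h12 := stmt19G_coe ℬ (ε := ε) (GradedMonoid.GMul.mul (A := (ℬ ·)) b₁ b₂)
      rw [SetLike.coe_gMul] at h12
      rw [h12, stmt19G_coe ℬ b₁, stmt19G_coe ℬ b₂, Algebra.TensorProduct.tmul_mul_tmul,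
        stmt19P_mul hε2])

lemma stmt19GAlg_coe (hε2 : ε * ε = 1) {j : ZMod 2} (b : ℬ j) :
    stmt19GAlg ℬ ε hε2 (b : B) = stmt19P ε j ⊗ₜ[ℝ] (b : B) := stmt19G_coe ℬ b


variable (ε) in
/-- The algebra hom `a ᵍ⊗ b ↦ a ε^{|b|} ⊗ b`. -/
def stmt19Phi (hε2 : ε * ε = 1) (hcomm : ∀ a ∈ 𝒜 0, ε * a = a * ε)
    (hanti : ∀ a ∈ 𝒜 1, ε * a = -(a * ε)) : (𝒜 ᵍ⊗[ℝ] ℬ) →ₐ[ℝ] A ⊗[ℝ] B :=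
  GradedTensorProduct.lift 𝒜 ℬ Algebra.TensorProduct.includeLeft (stmt19GAlg ℬ ε hε2)
    (fun i j a b => by
      rw [Algebra.TensorProduct.includeLeft_apply, stmt19GAlg_coe,
        Algebra.TensorProduct.tmul_mul_tmul, Algebra.TensorProduct.tmul_mul_tmul, one_mul,
        mul_one, stmt19P_comm 𝒜 hcomm hanti (a : A) a.2 j, Units.smul_def, Units.smul_def,
        ← TensorProduct.smul_tmul'])

variable (ε) in
/-- `stmt19Phi` as a linear endomorphism of `A ⊗ B`. -/
def stmt19T (hε2 : ε * ε = 1) (hcomm : ∀ a ∈ 𝒜 0, ε * a = a * ε)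
    (hanti : ∀ a ∈ 𝒜 1, ε * a = -(a * ε)) : A ⊗[ℝ] B →ₗ[ℝ] A ⊗[ℝ] B :=
  (stmt19Phi 𝒜 ℬ ε hε2 hcomm hanti).toLinearMap ∘ₗ (GradedTensorProduct.of ℝ 𝒜 ℬ).toLinearMap

variable {hε2 : ε * ε = 1} {hcomm : ∀ a ∈ 𝒜 0, ε * a = a * ε}
  {hanti : ∀ a ∈ 𝒜 1, ε * a = -(a * ε)}

lemma stmt19T_tmul (a : A) {j : ZMod 2} (b : ℬ j) :
    stmt19T 𝒜 ℬ ε hε2 hcomm hanti (a ⊗ₜ[ℝ] (b : B)) = (a * stmt19P ε j) ⊗ₜ[ℝ] (b : B) := by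
  show stmt19Phi 𝒜 ℬ ε hε2 hcomm hanti (a ᵍ⊗ₜ[ℝ] (b : B)) = _
  rw [stmt19Phi, GradedTensorProduct.lift_tmul, Algebra.TensorProduct.includeLeft_apply,
    stmt19GAlg_coe, Algebra.TensorProduct.tmul_mul_tmul, one_mul]

lemma stmt19T_invol :
    stmt19T 𝒜 ℬ ε hε2 hcomm hanti ∘ₗ stmt19T 𝒜 ℬ ε hε2 hcomm hanti = LinearMap.id := by
  apply TensorProduct.ext
  ext a : 1
  refine DirectSum.decompose_lhom_ext ℬ fun j => ?_
  ext b : 1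
  dsimp only [LinearMap.comp_apply, Submodule.subtype_apply, TensorProduct.mk_apply,
    LinearMap.compr₂_apply, LinearMap.compr₂ₛₗ_apply, LinearMap.id_apply]
  rw [stmt19T_tmul, stmt19T_tmul, mul_assoc, stmt19P_mul hε2,
    CharTwo.add_self_eq_zero, stmt19P_zero, mul_one]

end Stmt19Aux

/-- if a ℤ/2-graded ℝ-algebra `A` has an even element `ε` with `ε² = 1`,
commuting with the even part and anticommuting with the odd part, then for any ℤ/2-graded
ℝ-algebra `B` the graded tensor product `A ⊗̂ B` is isomorphic as an ℝ-algebra to the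
ungraded tensor product `A ⊗ B`. -/
theorem stmt19 (A B : Type) [Ring A] [Ring B] [Algebra ℝ A] [Algebra ℝ B]
    (𝒜 : ZMod 2 → Submodule ℝ A) (ℬ : ZMod 2 → Submodule ℝ B)
    [GradedAlgebra 𝒜] [GradedAlgebra ℬ]
    (ε : A) (hε0 : ε ∈ 𝒜 0) (hε2 : ε * ε = 1)
    (hcomm : ∀ a ∈ 𝒜 0, ε * a = a * ε)
    (hanti : ∀ a ∈ 𝒜 1, ε * a = -(a * ε)) :
    Nonempty ((𝒜 ᵍ⊗[ℝ] ℬ) ≃ₐ[ℝ] A ⊗[ℝ] B) := by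
  set Φ := stmt19Phi 𝒜 ℬ ε hε2 hcomm hanti with hΦ
  set T := stmt19T 𝒜 ℬ ε hε2 hcomm hanti with hT
  have hTT : ∀ z, T (T z) = z := fun z =>
    DFunLike.congr_fun (stmt19T_invol 𝒜 ℬ (hε2 := hε2) (hcomm := hcomm) (hanti := hanti)) z
  have hPhiT : ∀ z : 𝒜 ᵍ⊗[ℝ] ℬ, Φ z = T ((GradedTensorProduct.of ℝ 𝒜 ℬ).symm z) := fun z => rfl
  refine ⟨AlgEquiv.ofBijective Φ ⟨?_, ?_⟩⟩
  · intro x y h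
    have h2 : T ((GradedTensorProduct.of ℝ 𝒜 ℬ).symm x)
        = T ((GradedTensorProduct.of ℝ 𝒜 ℬ).symm y) := h
    have := congrArg T h2
    rw [hTT, hTT] at this
    exact (GradedTensorProduct.of ℝ 𝒜 ℬ).symm.injective this
  · intro z
    refine ⟨GradedTensorProduct.of ℝ 𝒜 ℬ (T z), ?_⟩
    rw [hPhiT, LinearEquiv.symm_apply_apply, hTT]
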